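/- Let φ be a poor man's formula, written as a conjunction of conjuncts c₁ ∧ ⋯ ∧ c_t where each conjunct c_i is a literal, a formula □ψ, or a formula ◇ξ. Then φ is satisfiable with respect to F≥1 if and only if for every pair of (not necessarily distinct) indices i, j ∈ {1,…,t}, the conjunction c_i ∧ c_j is satisfiable with respect to F≥1. -/

import Mathlib

namespace PoorMansModal

/-- Modal formulas over propositional variables of type `α`: variables `p`,
negated variables `p̄`, general negation, conjunction, disjunction, box, diamond,
and the constants `true` and `false`. -/
inductive Fml (α : Type) : Type where
  | var : α → Fml α
  | nvar : α → Fml α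
  | neg : Fml α → Fml α
  | and : Fml α → Fml α → Fml α
  | or : Fml α → Fml α → Fml α
  | box : Fml α → Fml α
  | dia : Fml α → Fml α
  | tru : Fml α
  | fls : Fml α

/-- A Kripke model: a nonempty set of worlds, an accessibility relation, and a valuation. -/
structure Kripke (α : Type) where
  World : Type
  nonempty : Nonempty World
  R : World → World → Prop
  V : α → World → Prop

/-- Truth of a formula at a world of a model. -/
def Sat {α : Type} (M : Kripke α) : Fml α → M.World → Prop
  | .var p, w => M.V p w
  | .nvar p, w => ¬ M.V p w
  | .neg φ, w => ¬ Sat M φ w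
  | .and φ ψ, w => Sat M φ w ∧ Sat M ψ w
  | .or φ ψ, w => Sat M φ w ∨ Sat M ψ w
  | .box φ, w => ∀ v, M.R w v → Sat M φ v
  | .dia φ, w => ∃ v, M.R w v ∧ Sat M φ v
  | .tru, _ => True
  | .fls, _ => False

/-- Modal depth: depth of nesting of `□` and `◇`. -/
def mdep {α : Type} : Fml α → ℕ
  | .var _ => 0
  | .nvar _ => 0
  | .neg φ => mdep φ
  | .and φ ψ => max (mdep φ) (mdep ψ)
  | .or φ ψ => max (mdep φ) (mdep ψ)
  | .box φ => mdep φ + 1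
  | .dia φ => mdep φ + 1
  | .tru => 0
  | .fls => 0

/-- Conjunction of a list of formulas; the empty conjunction is the always-true formula. -/
def bigConj {α : Type} : List (Fml α) → Fml α
  | [] => .tru
  | [φ] => φ
  | φ :: rest => .and φ (bigConj rest)

/-- `□^k φ`. -/
def boxI {α : Type} : ℕ → Fml α → Fml α
  | 0, φ => φ
  | k + 1, φ => .box (boxI k φ)

/-- `◇^k φ`. -/
def diaI {α : Type} : ℕ → Fml α → Fml α
  | 0, φ => φ
  | k + 1, φ => .dia (diaI k φ)

/-- `(◇□)^k φ`. -/
def diaBoxI {α : Type} : ℕ → Fml α → Fml α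
  | 0, φ => φ
  | k + 1, φ => .dia (.box (diaBoxI k φ))

/-- The literal with variable `l.1` and sign `l.2` (`true` = positive). -/
def litF {α : Type} (l : α × Bool) : Fml α := if l.2 then .var l.1 else .nvar l.1

/-- The variable `p` occurs in the formula. -/
def occursV {α : Type} (p : α) : Fml α → Prop
  | .var q => p = q
  | .nvar q => p = q
  | .neg φ => occursV p φ
  | .and φ ψ => occursV p φ ∨ occursV p ψ
  | .or φ ψ => occursV p φ ∨ occursV p ψ
  | .box φ => occursV p φ
  | .dia φ => occursV p φ
  | .tru => False
  | .fls => False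

/-- Poor man's formulas: built from literals, `∧`, `□`, `◇` only. -/
def PoorF {α : Type} : Fml α → Prop
  | .var _ => True
  | .nvar _ => True
  | .and φ ψ => PoorF φ ∧ PoorF ψ
  | .box φ => PoorF φ
  | .dia φ => PoorF φ
  | _ => False

/-- Formulas of the language `L`: built from literals, `∧`, `∨`, `□`, `◇`. -/
def InL {α : Type} : Fml α → Prop
  | .var _ => True
  | .nvar _ => True
  | .and φ ψ => InL φ ∧ InL ψ
  | .or φ ψ => InL φ ∧ InL ψ
  | .box φ => InL φ
  | .dia φ => InL φ
  | _ => False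

/-- Every world has at most one successor. -/
def AtMostOne {W : Type} (R : W → W → Prop) : Prop :=
  ∀ w v v', R w v → R w v' → v = v'

/-- Every world has at least one successor. -/
def AtLeastOne {W : Type} (R : W → W → Prop) : Prop :=
  ∀ w, ∃ v, R w v

/-- Every world has at most two successors. -/
def AtMostTwo {W : Type} (R : W → W → Prop) : Prop :=
  ∀ w v₁ v₂ v₃, R w v₁ → R w v₂ → R w v₃ → v₁ = v₂ ∨ v₁ = v₃ ∨ v₂ = v₃

/-- `chainR R n w v`: there is an `R`-path of length exactly `n` from `w` to `v`. -/
def chainR {W : Type} (R : W → W → Prop) : ℕ → W → W → Prop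
  | 0, w, v => w = v
  | k + 1, w, v => ∃ u, R w u ∧ chainR R k u v

/-- `R` is the parent-child relation of a rooted tree with root `root`
in which every node has at most two children. -/
structure IsBinTree {W : Type} (R : W → W → Prop) (root : W) : Prop where
  reach : ∀ w, Relation.ReflTransGen R root w
  root_no_parent : ∀ w, ¬ R w root
  unique_parent : ∀ w v v', R v w → R v' w → v = v'
  acyclic : ∀ w, ¬ Relation.TransGen R w w
  at_most_two_children : ∀ w v₁ v₂ v₃, R w v₁ → R w v₂ → R w v₃ → v₁ = v₂ ∨ v₁ = v₃ ∨ v₂ = v₃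

/-- `φ_exp = ⋀_{i=1}^n □^{i-1}(◇□^{n-i} p_i ∧ ◇□^{n-i} p̄_i)`, with `p_i = var i`. -/
def phiExp (n : ℕ) : Fml ℕ :=
  bigConj ((List.range n).map (fun j =>
    boxI j (.and (.dia (boxI (n - 1 - j) (.var (j + 1))))
                 (.dia (boxI (n - 1 - j) (.nvar (j + 1)))))))

/-- Satisfiability with respect to the class of all frames. -/
def SatAll (φ : Fml ℕ) : Prop := ∃ (M : Kripke ℕ) (w : M.World), Sat M φ w

/-- Satisfiability with respect to `F≤1`. -/
def SatLe1 (φ : Fml ℕ) : Prop := ∃ M : Kripke ℕ, AtMostOne M.R ∧ ∃ w, Sat M φ w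

/-- Satisfiability with respect to `F≥1`. -/
def SatGe1 (φ : Fml ℕ) : Prop := ∃ M : Kripke ℕ, AtLeastOne M.R ∧ ∃ w, Sat M φ w

/-- Satisfiability with respect to `F≤2`. -/
def SatLe2 (φ : Fml ℕ) : Prop := ∃ M : Kripke ℕ, AtMostTwo M.R ∧ ∃ w, Sat M φ w

/-- A one-world model with no successors, realizing the boolean assignment `v`;
truth at its world is propositional truth for formulas without modal operators. -/
def propModel (v : ℕ → Bool) : Kripke ℕ :=
  { World := Unit, nonempty := ⟨()⟩, R := fun _ _ => False, V := fun p _ => v p = true }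

/-- Propositional satisfaction of `φ` under the assignment `v`. -/
def PropSat (v : ℕ → Bool) (φ : Fml ℕ) : Prop := Sat (propModel v) φ ()


/-- A conjunct of a (flattened) poor man's formula: a literal, a `□`-formula, or a
`◇`-formula (over poor man's formulas). -/
def IsConjunct : Fml ℕ → Prop
  | .var _ => True
  | .nvar _ => True
  | .box ψ => PoorF ψ
  | .dia ψ => PoorF ψ
  | _ => False

/-- Flatten a formula into its list of conjuncts. -/
def conjuncts : Fml ℕ → List (Fml ℕ)
  | .and φ ψ => conjuncts φ ++ conjuncts ψ
  | φ => [φ]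

lemma conjuncts_isConjunct {φ : Fml ℕ} (h : PoorF φ) :
    ∀ d ∈ conjuncts φ, IsConjunct d := by
  induction φ with
  | and φ ψ ihφ ihψ =>
      intro d hd
      simp only [conjuncts, List.mem_append] at hd
      rcases hd with hd | hd
      · exact ihφ h.1 d hd
      · exact ihψ h.2 d hd
  | var p => intro d hd; simp only [conjuncts, List.mem_singleton] at hd; subst hd; trivial
  | nvar p => intro d hd; simp only [conjuncts, List.mem_singleton] at hd; subst hd; trivial
  | box ψ _ => intro d hd; simp only [conjuncts, List.mem_singleton] at hd; subst hd; exact h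
  | dia ψ _ => intro d hd; simp only [conjuncts, List.mem_singleton] at hd; subst hd; exact h
  | neg φ _ => exact absurd h not_false
  | or φ ψ _ _ => exact absurd h not_false
  | tru => exact absurd h not_false
  | fls => exact absurd h not_false

lemma conjuncts_mdep {φ : Fml ℕ} : ∀ d ∈ conjuncts φ, mdep d ≤ mdep φ := by
  induction φ with
  | and φ ψ ihφ ihψ =>
      intro d hd
      simp only [conjuncts, List.mem_append] at hd
      rcases hd with hd | hd
      · exact le_trans (ihφ d hd) (le_max_left _ _)
      · exact le_trans (ihψ d hd) (le_max_right _ _)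
  | _ =>
      intro d hd
      simp only [conjuncts, List.mem_singleton] at hd
      subst hd
      exact le_rfl

lemma sat_conjuncts {M : Kripke ℕ} {φ : Fml ℕ} {w : M.World} :
    Sat M φ w ↔ ∀ d ∈ conjuncts φ, Sat M d w := by
  induction φ generalizing w with
  | and φ ψ ihφ ihψ =>
      simp only [Sat, conjuncts, List.mem_append]
      rw [ihφ, ihψ]
      constructor
      · rintro ⟨h1, h2⟩ d (hd | hd)
        · exact h1 d hd
        · exact h2 d hd
      · intro h
        exact ⟨fun d hd => h d (Or.inl hd), fun d hd => h d (Or.inr hd)⟩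
  | _ => simp [conjuncts]

lemma sat_bigConj {M : Kripke ℕ} {C : List (Fml ℕ)} {w : M.World} :
    Sat M (bigConj C) w ↔ ∀ c ∈ C, Sat M c w := by
  induction C with
  | nil => simp [bigConj, Sat]
  | cons c rest ih =>
      cases rest with
      | nil => simp [bigConj]
      | cons c' rest' =>
          simp only [bigConj, Sat] at *
          rw [ih]
          constructor
          · rintro ⟨h1, h2⟩ d hd
            rcases List.mem_cons.mp hd with rfl | hd
            · exact h1
            · exact h2 d hd
          · intro h
            exact ⟨h c List.mem_cons_self, fun d hd => h d (List.mem_cons_of_mem _ hd)⟩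

section Comb

variable {J : Type} (M : J → Kripke ℕ) (w : ∀ j, (M j).World) (v : ℕ → Prop)

/-- Worlds of the combined model: a fresh root plus the disjoint union. -/
def combW : Type := Unit ⊕ (Σ j : J, (M j).World)

/-- Accessibility of the combined model. -/
def combR : combW M → combW M → Prop := fun a b =>
  match a, b with
  | Sum.inl _, Sum.inr ⟨j, x⟩ => x = w j
  | Sum.inr ⟨j, x⟩, Sum.inr ⟨j', x'⟩ => ∃ h : j = j', (M j').R (h ▸ x) x'
  | _, _ => False

/-- The combined model. -/
def comb : Kripke ℕ where
  World := combW M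
  nonempty := ⟨Sum.inl ()⟩
  R := combR M w
  V := fun p a => match a with
    | Sum.inl _ => v p
    | Sum.inr ⟨j, x⟩ => (M j).V p x

lemma comb_serial [Nonempty J] (hM : ∀ j, AtLeastOne (M j).R) :
    AtLeastOne (comb M w v).R := by
  intro a
  cases a with
  | inl u =>
      obtain ⟨j⟩ := ‹Nonempty J›
      exact ⟨Sum.inr ⟨j, w j⟩, rfl⟩
  | inr b =>
      obtain ⟨j, x⟩ := b
      obtain ⟨y, hy⟩ := hM j x
      exact ⟨Sum.inr ⟨j, y⟩, ⟨rfl, hy⟩⟩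

lemma comb_sat (φ : Fml ℕ) (j : J) (x : (M j).World) :
    Sat (comb M w v) φ (Sum.inr ⟨j, x⟩) ↔ Sat (M j) φ x := by
  induction φ generalizing x with
  | box ψ ih =>
      simp only [Sat]
      constructor
      · intro h y hy
        exact (ih y).mp (h (Sum.inr ⟨j, y⟩) ⟨rfl, hy⟩)
      · intro h b hb
        cases b with
        | inl u => exact absurd hb (by intro hc; exact hc)
        | inr b =>
            obtain ⟨j', x'⟩ := b
            obtain ⟨h', hr⟩ := hb
            subst h'
            exact (ih x').mpr (h x' hr)
  | dia ψ ih =>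
      simp only [Sat]
      constructor
      · rintro ⟨b, hb, hsat⟩
        cases b with
        | inl u => exact absurd hb (by intro hc; exact hc)
        | inr b =>
            obtain ⟨j', x'⟩ := b
            obtain ⟨h', hr⟩ := hb
            subst h'
            exact ⟨x', hr, (ih x').mp hsat⟩
      · rintro ⟨y, hy, hsat⟩
        exact ⟨Sum.inr ⟨j, y⟩, ⟨rfl, hy⟩, (ih y).mpr hsat⟩
  | and φ ψ ihφ ihψ => simp only [Sat]; rw [ihφ, ihψ]
  | or φ ψ ihφ ihψ => simp only [Sat]; rw [ihφ, ihψ]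
  | neg φ ih => simp only [Sat]; rw [ih]
  | var p => simp [Sat, comb]
  | nvar p => simp [Sat, comb]
  | tru => simp [Sat]
  | fls => simp [Sat]

lemma comb_root_succ (b : combW M) :
    (comb M w v).R (Sum.inl ()) b ↔ ∃ j, b = Sum.inr ⟨j, w j⟩ := by
  cases b with
  | inl u =>
      constructor
      · intro h; exact absurd h (by intro hc; exact hc)
      · rintro ⟨j, hj⟩; exact absurd hj (by simp)
  | inr b =>
      obtain ⟨j, x⟩ := b
      constructor
      · intro h
        have : x = w j := h
        exact ⟨j, by rw [this]⟩
      · rintro ⟨j', hj⟩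
        have h1 : (⟨j, x⟩ : Σ j, (M j).World) = ⟨j', w j'⟩ := Sum.inr.inj hj
        obtain ⟨rfl, h2⟩ := Sigma.mk.inj_iff.mp h1
        show x = w j
        simpa using h2
end Comb

lemma satGe1_and_comm {a b : Fml ℕ} (h : SatGe1 (.and a b)) : SatGe1 (.and b a) := by
  obtain ⟨M, hser, w, h1, h2⟩ := h
  exact ⟨M, hser, w, h2, h1⟩

lemma pp_bb {ψ ψ' d d' : Fml ℕ} (h : SatGe1 (.and (.box ψ) (.box ψ')))
    (hd : d ∈ conjuncts ψ) (hd' : d' ∈ conjuncts ψ') : SatGe1 (.and d d') := by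
  obtain ⟨M, hser, w, h1, h2⟩ := h
  obtain ⟨v, hv⟩ := hser w
  exact ⟨M, hser, v, sat_conjuncts.mp (h1 v hv) d hd, sat_conjuncts.mp (h2 v hv) d' hd'⟩

lemma pp_bd {ψ ξ d d' : Fml ℕ} (h : SatGe1 (.and (.box ψ) (.dia ξ)))
    (hd : d ∈ conjuncts ψ) (hd' : d' ∈ conjuncts ξ) : SatGe1 (.and d d') := by
  obtain ⟨M, hser, w, h1, v, hv, h2⟩ := h
  exact ⟨M, hser, v, sat_conjuncts.mp (h1 v hv) d hd, sat_conjuncts.mp h2 d' hd'⟩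

lemma pp_dd {ξ d d' : Fml ℕ} (h : SatGe1 (.and (.dia ξ) (.dia ξ)))
    (hd : d ∈ conjuncts ξ) (hd' : d' ∈ conjuncts ξ) : SatGe1 (.and d d') := by
  obtain ⟨M, hser, w, ⟨v, hv, h1⟩, -⟩ := h
  exact ⟨M, hser, v, sat_conjuncts.mp h1 d hd, sat_conjuncts.mp h1 d' hd'⟩

/-- The flattened conjuncts of all `□`-conjuncts of `C`. -/
def boxParts (C : List (Fml ℕ)) : List (Fml ℕ) :=
  C.flatMap fun c => match c with | .box ψ => conjuncts ψ | _ => []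

lemma mem_boxParts {C : List (Fml ℕ)} {d : Fml ℕ} :
    d ∈ boxParts C ↔ ∃ ψ, Fml.box ψ ∈ C ∧ d ∈ conjuncts ψ := by
  simp only [boxParts, List.mem_flatMap]
  constructor
  · rintro ⟨c, hc, hd⟩
    cases c with
    | box ψ => exact ⟨ψ, hc, hd⟩
    | _ => simp at hd
  · rintro ⟨ψ, hψ, hd⟩
    exact ⟨.box ψ, hψ, hd⟩

lemma key (n : ℕ) : ∀ (C : List (Fml ℕ)), (∀ c ∈ C, IsConjunct c) →
    (∀ c ∈ C, mdep c ≤ n) →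
    (∀ c ∈ C, ∀ c' ∈ C, SatGe1 (.and c c')) →
    ∃ M : Kripke ℕ, AtLeastOne M.R ∧ ∃ w, ∀ c ∈ C, Sat M c w := by
  induction n with
  | zero =>
      intro C hcs hdep hpair
      refine ⟨⟨Unit, ⟨()⟩, fun _ _ => True, fun p _ => Fml.var p ∈ C⟩,
        fun _ => ⟨(), trivial⟩, (), ?_⟩
      intro c hc
      cases c with
      | var p => exact hc
      | nvar p =>
          intro hvar
          obtain ⟨M, hser, w, h1, h2⟩ := hpair _ hvar _ hc
          exact h2 h1
      | box ψ => exact absurd (hdep _ hc) (by simp [mdep])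
      | dia ψ => exact absurd (hdep _ hc) (by simp [mdep])
      | neg φ => exact absurd (hcs _ hc) not_false
      | or φ ψ => exact absurd (hcs _ hc) not_false
      | and φ ψ => exact absurd (hcs _ hc) not_false
      | tru => trivial
      | fls => exact absurd (hcs _ hc) not_false
  | succ n ih =>
      intro C hcs hdep hpair
      set J := Option {ξ : Fml ℕ // Fml.dia ξ ∈ C} with hJ
      haveI : Nonempty J := ⟨none⟩
      set S : J → List (Fml ℕ) := fun j => match j with
        | none => boxParts C
        | some ⟨ξ, _⟩ => boxParts C ++ conjuncts ξ with hS
      have hpoorbox : ∀ ψ, Fml.box ψ ∈ C → PoorF ψ := fun ψ h => hcs _ h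
      have hpoordia : ∀ ξ, Fml.dia ξ ∈ C → PoorF ξ := fun ξ h => hcs _ h
      have hSmem : ∀ (j : J) (d : Fml ℕ), d ∈ S j →
          (∃ ψ, Fml.box ψ ∈ C ∧ d ∈ conjuncts ψ) ∨
          (∃ ξ, ∃ h : Fml.dia ξ ∈ C, j = some ⟨ξ, h⟩ ∧ d ∈ conjuncts ξ) := by
        rintro (_ | ⟨ξ, hξ⟩) d hd
        · exact Or.inl (mem_boxParts.mp hd)
        · rcases List.mem_append.mp hd with hd | hd
          · exact Or.inl (mem_boxParts.mp hd)
          · exact Or.inr ⟨ξ, hξ, rfl, hd⟩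
      have hex : ∀ j : J, ∃ M : Kripke ℕ, AtLeastOne M.R ∧ ∃ w, ∀ d ∈ S j, Sat M d w := by
        intro j
        apply ih
        · intro d hd
          rcases hSmem j d hd with ⟨ψ, hψ, hdψ⟩ | ⟨ξ, hξ, _, hdξ⟩
          · exact conjuncts_isConjunct (hpoorbox ψ hψ) d hdψ
          · exact conjuncts_isConjunct (hpoordia ξ hξ) d hdξ
        · intro d hd
          rcases hSmem j d hd with ⟨ψ, hψ, hdψ⟩ | ⟨ξ, hξ, _, hdξ⟩
          · have := hdep _ hψ
            simp only [mdep, Nat.add_le_add_iff_right] at this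
            exact le_trans (conjuncts_mdep d hdψ) this
          · have := hdep _ hξ
            simp only [mdep, Nat.add_le_add_iff_right] at this
            exact le_trans (conjuncts_mdep d hdξ) this
        · intro d hd d' hd'
          rcases hSmem j d hd with ⟨ψ, hψ, hdψ⟩ | ⟨ξ, hξ, hj, hdξ⟩ <;>
            rcases hSmem j d' hd' with ⟨ψ', hψ', hdψ'⟩ | ⟨ξ', hξ', hj', hdξ'⟩
          · exact pp_bb (hpair _ hψ _ hψ') hdψ hdψ'
          · exact pp_bd (hpair _ hψ _ hξ') hdψ hdξ'
          · exact satGe1_and_comm (pp_bd (hpair _ hψ' _ hξ) hdψ' hdξ)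
          · have : ξ = ξ' := by
              rw [hj] at hj'
              have := Option.some.inj hj'
              exact congrArg Subtype.val this
            subst this
            exact pp_dd (hpair _ hξ _ hξ) hdξ hdξ'
      choose Mf hser wf hsat using hex
      refine ⟨comb Mf wf (fun p => Fml.var p ∈ C), comb_serial Mf wf _ hser, Sum.inl (), ?_⟩
      intro c hc
      cases c with
      | var p => exact hc
      | nvar p =>
          intro hvar
          obtain ⟨M, _, w0, h1, h2⟩ := hpair _ hvar _ hc
          exact h2 h1
      | box ψ =>
          intro b hb
          replace hb := (comb_root_succ Mf wf _ b).mp hb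
          obtain ⟨j, rfl⟩ := hb
          rw [comb_sat]
          apply sat_conjuncts.mpr
          intro d hd
          apply hsat j
          have hdb : d ∈ boxParts C := mem_boxParts.mpr ⟨ψ, hc, hd⟩
          match j with
          | none => exact hdb
          | some ⟨ξ, hξ⟩ => exact List.mem_append.mpr (Or.inl hdb)
      | dia ξ =>
          refine ⟨Sum.inr ⟨some ⟨ξ, hc⟩, wf (some ⟨ξ, hc⟩)⟩,
            (comb_root_succ Mf wf _ _).mpr ⟨some ⟨ξ, hc⟩, rfl⟩, ?_⟩
          rw [comb_sat]
          apply sat_conjuncts.mpr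
          intro d hd
          exact hsat (some ⟨ξ, hc⟩) d (List.mem_append.mpr (Or.inr hd))
      | neg φ => exact absurd (hcs _ hc) not_false
      | or φ ψ => exact absurd (hcs _ hc) not_false
      | and φ ψ => exact absurd (hcs _ hc) not_false
      | tru => trivial
      | fls => exact absurd (hcs _ hc) not_false


/-- A poor man's formula `c₁ ∧ ⋯ ∧ c_t` is satisfiable with respect to `F≥1`
iff every pair (not necessarily distinct) of its conjuncts `c_i ∧ c_j` is satisfiable
with respect to `F≥1`. -/
theorem stmt7 (cs : List (Fml ℕ)) (hcs : ∀ c ∈ cs, IsConjunct c) :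
    SatGe1 (bigConj cs) ↔ ∀ c ∈ cs, ∀ c' ∈ cs, SatGe1 (.and c c') := by
  constructor
  · rintro ⟨M, hser, w, hw⟩
    intro c hc c' hc'
    have h := sat_bigConj.mp hw
    exact ⟨M, hser, w, h c hc, h c' hc'⟩
  · intro hpair
    obtain ⟨M, hser, w, hw⟩ := key ((cs.map mdep).sum) cs hcs
      (fun c hc => List.single_le_sum (by simp) _ (List.mem_map_of_mem (f := mdep) hc)) hpair
    exact ⟨M, hser, w, sat_bigConj.mpr hw⟩


end PoorMansModal
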